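/- Approximate optimality of the patched estimator (performance theorem): Under additive disturbances f = f_a + w, quadratic stage cost l(x,w;d) = |w|²_Q + |y − h(x,u)|²_R and terminal cost g(x;d) = |y − h(x,u)|²_G, Lipschitz continuity of f_a and h (constants L_f, L_h), and the turnpike bound |ẑ^ae_j − z*_j| ≤ σ(N) := 2β(C, N/2) for all j ∈ {0,...,T}, the approximate estimator satisfies, for every ε > 0, J_T(x̂^ae, ŵ^ae; d_{0:T}) ≤ (1+ε)·V_T(d_{0:T}) + ((1+ε)/ε)·(T·σ₁(N) + σ₂(N)), where σ₁(s) = ((1+L_f)²·λ_max(Q)² + L_h²·λ_max(R)²)·σ(s)² and σ₂(s) = L_h²·λ_max(G)²·σ(s)² are class-L functions. -/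

import Mathlib

open Matrix

/-- Euclidean norm `|v| = √(vᵀv)` of a vector. -/
noncomputable def evnorm {p : ℕ} (v : Fin p → ℝ) : ℝ :=
  Real.sqrt (v ⬝ᵥ v)

/-- Weighted norm `|v|_Q = √(vᵀ Q v)` for a (positive definite) matrix `Q`. -/
noncomputable def wnorm {p : ℕ} (Q : Matrix (Fin p) (Fin p) ℝ) (v : Fin p → ℝ) : ℝ :=
  Real.sqrt (v ⬝ᵥ Q *ᵥ v)

/-- Estimation cost
`J_T(x, w; d) = Σ_{j<T} (|w_j|²_Q + |y_j − h(x_j,u_j)|²_R) + |y_T − h(x_T,u_T)|²_G`. -/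
noncomputable def Jcost {n m p : ℕ} (Q : Matrix (Fin n) (Fin n) ℝ)
    (R G : Matrix (Fin p) (Fin p) ℝ)
    (h : (Fin n → ℝ) → (Fin m → ℝ) → (Fin p → ℝ))
    (u : ℕ → Fin m → ℝ) (y : ℕ → Fin p → ℝ) (T : ℕ)
    (x : ℕ → Fin n → ℝ) (w : ℕ → Fin n → ℝ) : ℝ :=
  (∑ j ∈ Finset.range T,
    (wnorm Q (w j) ^ 2 + wnorm R (y j - h (x j) (u j)) ^ 2))
    + wnorm G (y T - h (x T) (u T)) ^ 2

lemma evnorm_eq_norm {p : ℕ} (v : Fin p → ℝ) :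
    evnorm v = ‖(EuclideanSpace.equiv (Fin p) ℝ).symm v‖ := by
  rw [evnorm, EuclideanSpace.norm_eq]
  congr 1
  rw [dotProduct]
  exact Finset.sum_congr rfl fun i _ => by
    simp [Real.norm_eq_abs, sq_abs, sq]

lemma evnorm_nonneg {p : ℕ} (v : Fin p → ℝ) : 0 ≤ evnorm v := Real.sqrt_nonneg _

lemma evnorm_add_le {p : ℕ} (a b : Fin p → ℝ) : evnorm (a + b) ≤ evnorm a + evnorm b := by
  rw [evnorm_eq_norm, evnorm_eq_norm, evnorm_eq_norm, map_add]
  exact norm_add_le _ _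

lemma evnorm_neg {p : ℕ} (a : Fin p → ℝ) : evnorm (-a) = evnorm a := by
  rw [evnorm_eq_norm, evnorm_eq_norm, map_neg, norm_neg]

lemma wnorm_nonneg {p : ℕ} (Q : Matrix (Fin p) (Fin p) ℝ) (v : Fin p → ℝ) :
    0 ≤ wnorm Q v := Real.sqrt_nonneg _

open scoped MatrixOrder in
lemma wnorm_eq_evnorm {p : ℕ} {Q : Matrix (Fin p) (Fin p) ℝ} (hQ : Q.PosSemidef)
    (v : Fin p → ℝ) : wnorm Q v = evnorm (CFC.sqrt Q *ᵥ v) := by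
  rw [wnorm, evnorm]
  congr 1
  conv_lhs => rw [← CFC.sq_sqrt Q hQ.nonneg]
  have hs : (CFC.sqrt Q)ᵀ = CFC.sqrt Q := by
    have := (CFC.sqrt_nonneg Q).posSemidef.isHermitian
    rw [Matrix.IsHermitian, conjTranspose] at this
    ext i j
    simpa using congrFun (congrFun this i) j
  rw [pow_two, ← mulVec_mulVec, dotProduct_mulVec, ← mulVec_transpose, hs]

lemma wnorm_add_le {p : ℕ} {Q : Matrix (Fin p) (Fin p) ℝ} (hQ : Q.PosSemidef)
    (a b : Fin p → ℝ) : wnorm Q (a + b) ≤ wnorm Q a + wnorm Q b := by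
  rw [wnorm_eq_evnorm hQ, wnorm_eq_evnorm hQ, wnorm_eq_evnorm hQ, mulVec_add]
  exact evnorm_add_le _ _

lemma young_sq (ε a b : ℝ) (hε : 0 < ε) :
    (a + b) ^ 2 ≤ (1 + ε) * a ^ 2 + (1 + ε) / ε * b ^ 2 := by
  rw [← sub_nonneg]
  have h : (1 + ε) * a ^ 2 + (1 + ε) / ε * b ^ 2 - (a + b) ^ 2 = (ε * a - b) ^ 2 / ε := by
    field_simp
    ring
  rw [h]
  positivity

lemma key_sq (ε a b c : ℝ) (hε : 0 < ε) (ha : 0 ≤ a) (habc : a ≤ b + c) :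
    a ^ 2 ≤ (1 + ε) * b ^ 2 + (1 + ε) / ε * c ^ 2 :=
  le_trans (pow_le_pow_left₀ ha habc 2) (young_sq ε b c hε)

lemma bound_sq {p : ℕ} {Q : Matrix (Fin p) (Fin p) ℝ} (hQ : Q.PosSemidef)
    (lQ : ℝ) (hlQ0 : 0 ≤ lQ) (hlQ : ∀ v, wnorm Q v ≤ lQ * evnorm v)
    (a b : Fin p → ℝ) (c ε : ℝ) (hε : 0 < ε) (hc : evnorm (a - b) ≤ c) :
    wnorm Q a ^ 2 ≤ (1 + ε) * wnorm Q b ^ 2 + (1 + ε) / ε * (lQ * c) ^ 2 := by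
  refine key_sq ε _ _ _ hε (wnorm_nonneg _ _) ?_
  calc wnorm Q a = wnorm Q (b + (a - b)) := by ring_nf
    _ ≤ wnorm Q b + wnorm Q (a - b) := wnorm_add_le hQ _ _
    _ ≤ wnorm Q b + lQ * evnorm (a - b) := by linarith [hlQ (a - b)]
    _ ≤ wnorm Q b + lQ * c := by nlinarith [evnorm_nonneg (a - b)]


/-- **Approximate optimality of the patched estimator** (Theorem 3): with
additive disturbances, quadratic stage and terminal costs, Lipschitz `f_a` and
`h`, spectral bounds `|v|_Q ≤ λ_Q|v|` etc. (paper's constants taken as given),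
and the turnpike bound `|x̂^ae_j − x*_j| ≤ σ(N) := 2β(C, N/2)` for all
`j ≤ T`, the approximate estimator satisfies, for every `ε > 0`,
`J_T(x̂^ae, ŵ^ae) ≤ (1+ε)·V_T + ((1+ε)/ε)·(T·σ₁(N) + σ₂(N))` with
`σ₁(N) = ((1+L_f)²λ_Q² + L_h²λ_R²)·σ(N)²` and `σ₂(N) = L_h²λ_G²·σ(N)²`. -/
theorem approximate_estimator_performance {n m p : ℕ}
    (Q : Matrix (Fin n) (Fin n) ℝ) (hQ : Q.PosDef)
    (R G : Matrix (Fin p) (Fin p) ℝ) (hR : R.PosDef) (hG : G.PosDef)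
    (lQ lR lG : ℝ) (hlQ0 : 0 ≤ lQ) (hlR0 : 0 ≤ lR) (hlG0 : 0 ≤ lG)
    (hlQ : ∀ v : Fin n → ℝ, wnorm Q v ≤ lQ * evnorm v)
    (hlR : ∀ v : Fin p → ℝ, wnorm R v ≤ lR * evnorm v)
    (hlG : ∀ v : Fin p → ℝ, wnorm G v ≤ lG * evnorm v)
    (fa : (Fin n → ℝ) → (Fin m → ℝ) → (Fin n → ℝ))
    (h : (Fin n → ℝ) → (Fin m → ℝ) → (Fin p → ℝ))
    (Lf Lh : ℝ) (hLf0 : 0 ≤ Lf) (hLh0 : 0 ≤ Lh)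
    (hLf : ∀ (x1 x2 : Fin n → ℝ) (uu : Fin m → ℝ),
      evnorm (fa x1 uu - fa x2 uu) ≤ Lf * evnorm (x1 - x2))
    (hLh : ∀ (x1 x2 : Fin n → ℝ) (uu : Fin m → ℝ),
      evnorm (h x1 uu - h x2 uu) ≤ Lh * evnorm (x1 - x2))
    (T N : ℕ) (u : ℕ → Fin m → ℝ) (y : ℕ → Fin p → ℝ)
    -- full-information optimal solution (x*, w*): feasible and minimizing
    (xstar wstar : ℕ → Fin n → ℝ)
    (hdyn : ∀ j < T, xstar (j + 1) = fa (xstar j) (u j) + wstar j)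
    (hmin : ∀ (x w : ℕ → Fin n → ℝ),
      (∀ j < T, x (j + 1) = fa (x j) (u j) + w j) →
      Jcost Q R G h u y T xstar wstar ≤ Jcost Q R G h u y T x w)
    -- approximate estimator and its induced disturbances
    (xae : ℕ → Fin n → ℝ) (wae : ℕ → Fin n → ℝ)
    (hwae : ∀ j, wae j = xae (j + 1) - fa (xae j) (u j))
    -- turnpike bound σ(N) = 2 β(C, N/2)
    (β : ℝ → ℝ → ℝ) (C : ℝ) (hβnn : 0 ≤ β C ((N : ℝ) / 2))
    (hturn : ∀ j ≤ T, evnorm (xae j - xstar j) ≤ 2 * β C ((N : ℝ) / 2)) :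
    ∀ ε > (0:ℝ),
      Jcost Q R G h u y T xae wae ≤
        (1 + ε) * Jcost Q R G h u y T xstar wstar +
          ((1 + ε) / ε) *
            ((T : ℝ) * (((1 + Lf) ^ 2 * lQ ^ 2 + Lh ^ 2 * lR ^ 2) *
                (2 * β C ((N : ℝ) / 2)) ^ 2)
              + Lh ^ 2 * lG ^ 2 * (2 * β C ((N : ℝ) / 2)) ^ 2) := by
  intro ε hε
  set σ : ℝ := 2 * β C ((N : ℝ) / 2) with hσdef
  have hσ0 : 0 ≤ σ := by positivity
  set σ1 : ℝ := ((1 + Lf) ^ 2 * lQ ^ 2 + Lh ^ 2 * lR ^ 2) * σ ^ 2 with hσ1def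
  set σ2 : ℝ := Lh ^ 2 * lG ^ 2 * σ ^ 2 with hσ2def
  -- stagewise bounds
  have hstage : ∀ j ∈ Finset.range T,
      wnorm Q (wae j) ^ 2 + wnorm R (y j - h (xae j) (u j)) ^ 2 ≤
        (1 + ε) * (wnorm Q (wstar j) ^ 2 + wnorm R (y j - h (xstar j) (u j)) ^ 2)
          + (1 + ε) / ε * σ1 := by
    intro j hj
    rw [Finset.mem_range] at hj
    have ht1 : evnorm (xae j - xstar j) ≤ σ := hturn j hj.le
    have ht2 : evnorm (xae (j + 1) - xstar (j + 1)) ≤ σ := hturn (j + 1) hj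
    -- disturbance difference bound
    have hwdiff : evnorm (wae j - wstar j) ≤ (1 + Lf) * σ := by
      have hws : wstar j = xstar (j + 1) - fa (xstar j) (u j) := by
        rw [hdyn j hj]; abel
      have heq : wae j - wstar j =
          (xae (j + 1) - xstar (j + 1)) + (fa (xstar j) (u j) - fa (xae j) (u j)) := by
        rw [hwae j, hws]; abel
      calc evnorm (wae j - wstar j)
          ≤ evnorm (xae (j + 1) - xstar (j + 1))
            + evnorm (fa (xstar j) (u j) - fa (xae j) (u j)) := by
            rw [heq]; exact evnorm_add_le _ _
        _ ≤ σ + Lf * evnorm (xstar j - xae j) := by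
            linarith [hLf (xstar j) (xae j) (u j)]
        _ ≤ σ + Lf * σ := by
            have : evnorm (xstar j - xae j) = evnorm (xae j - xstar j) := by
              rw [← evnorm_neg (xstar j - xae j), neg_sub]
            nlinarith [this ▸ ht1]
        _ = (1 + Lf) * σ := by ring
    have hQterm := bound_sq hQ.posSemidef lQ hlQ0 hlQ (wae j) (wstar j)
      ((1 + Lf) * σ) ε hε hwdiff
    have hhdiff : evnorm ((y j - h (xae j) (u j)) - (y j - h (xstar j) (u j))) ≤ Lh * σ := by
      have heq : (y j - h (xae j) (u j)) - (y j - h (xstar j) (u j)) =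
          h (xstar j) (u j) - h (xae j) (u j) := by abel
      rw [heq]
      calc evnorm (h (xstar j) (u j) - h (xae j) (u j))
          ≤ Lh * evnorm (xstar j - xae j) := hLh _ _ _
        _ ≤ Lh * σ := by
            have : evnorm (xstar j - xae j) = evnorm (xae j - xstar j) := by
              rw [← evnorm_neg (xstar j - xae j), neg_sub]
            nlinarith [this ▸ ht1]
    have hRterm := bound_sq hR.posSemidef lR hlR0 hlR (y j - h (xae j) (u j))
      (y j - h (xstar j) (u j)) (Lh * σ) ε hε hhdiff
    have hσ1eq : (lQ * ((1 + Lf) * σ)) ^ 2 + (lR * (Lh * σ)) ^ 2 = σ1 := by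
      rw [hσ1def]; ring
    calc wnorm Q (wae j) ^ 2 + wnorm R (y j - h (xae j) (u j)) ^ 2
        ≤ ((1 + ε) * wnorm Q (wstar j) ^ 2 + (1 + ε) / ε * (lQ * ((1 + Lf) * σ)) ^ 2)
          + ((1 + ε) * wnorm R (y j - h (xstar j) (u j)) ^ 2
            + (1 + ε) / ε * (lR * (Lh * σ)) ^ 2) := add_le_add hQterm hRterm
      _ = (1 + ε) * (wnorm Q (wstar j) ^ 2 + wnorm R (y j - h (xstar j) (u j)) ^ 2)
          + (1 + ε) / ε * σ1 := by rw [← hσ1eq]; ring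
  -- terminal bound
  have hterm : wnorm G (y T - h (xae T) (u T)) ^ 2 ≤
      (1 + ε) * wnorm G (y T - h (xstar T) (u T)) ^ 2 + (1 + ε) / ε * σ2 := by
    have ht1 : evnorm (xae T - xstar T) ≤ σ := hturn T le_rfl
    have hhdiff : evnorm ((y T - h (xae T) (u T)) - (y T - h (xstar T) (u T))) ≤ Lh * σ := by
      have heq : (y T - h (xae T) (u T)) - (y T - h (xstar T) (u T)) =
          h (xstar T) (u T) - h (xae T) (u T) := by abel
      rw [heq]
      calc evnorm (h (xstar T) (u T) - h (xae T) (u T))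
          ≤ Lh * evnorm (xstar T - xae T) := hLh _ _ _
        _ ≤ Lh * σ := by
            have : evnorm (xstar T - xae T) = evnorm (xae T - xstar T) := by
              rw [← evnorm_neg (xstar T - xae T), neg_sub]
            nlinarith [this ▸ ht1]
    have hGterm := bound_sq hG.posSemidef lG hlG0 hlG (y T - h (xae T) (u T))
      (y T - h (xstar T) (u T)) (Lh * σ) ε hε hhdiff
    have hσ2eq : (lG * (Lh * σ)) ^ 2 = σ2 := by rw [hσ2def]; ring
    linarith [hσ2eq ▸ hGterm]
  -- combine
  unfold Jcost
  calc (∑ j ∈ Finset.range T,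
        (wnorm Q (wae j) ^ 2 + wnorm R (y j - h (xae j) (u j)) ^ 2))
        + wnorm G (y T - h (xae T) (u T)) ^ 2
      ≤ (∑ j ∈ Finset.range T,
          ((1 + ε) * (wnorm Q (wstar j) ^ 2 + wnorm R (y j - h (xstar j) (u j)) ^ 2)
            + (1 + ε) / ε * σ1))
        + ((1 + ε) * wnorm G (y T - h (xstar T) (u T)) ^ 2 + (1 + ε) / ε * σ2) :=
        add_le_add (Finset.sum_le_sum hstage) hterm
    _ = (1 + ε) * ((∑ j ∈ Finset.range T,
          (wnorm Q (wstar j) ^ 2 + wnorm R (y j - h (xstar j) (u j)) ^ 2))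
          + wnorm G (y T - h (xstar T) (u T)) ^ 2)
        + (1 + ε) / ε * ((T : ℝ) * σ1 + σ2) := by
        rw [Finset.sum_add_distrib, Finset.sum_const, ← Finset.mul_sum, nsmul_eq_mul,
          Finset.card_range]
        ring
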